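/- A finite directed acyclic graph G (without loops) is the transitive closure of a branching if and only if G is transitive and every vertex's set of in-neighbors is totally ordered by the edge relation (i.e., for any two distinct in-neighbors p₁, p₂ of a vertex x, either (p₁,p₂) ∈ E or (p₂,p₁) ∈ E). -/

import Mathlib

/-- A branching: a directed forest with all in-degrees at most one and no cycles. -/
def IsBranching {α : Type*} (B : α → α → Prop) : Prop :=
  (∀ u v w, B u w → B v w → u = v) ∧ (∀ v, ¬ Relation.TransGen B v v)

/-- A finite loopless DAG is the transitive closure of a branching iff it is transitive
and the in-neighbourhood of every vertex is totally ordered by the edge relation. -/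
theorem stmt7 {V : Type*} [Fintype V] (G : V → V → Prop)
    (hacyc : ∀ v, ¬ Relation.TransGen G v v) :
    (∃ B : V → V → Prop, IsBranching B ∧ ∀ u w, G u w ↔ Relation.TransGen B u w) ↔
    ((∀ x y z, G x y → G y z → G x z) ∧
      ∀ x p₁ p₂, G p₁ x → G p₂ x → p₁ ≠ p₂ → (G p₁ p₂ ∨ G p₂ p₁)) := by
  constructor
  · rintro ⟨B, ⟨hdeg, hBacyc⟩, hG⟩
    constructor
    · intro x y z hxy hyz
      rw [hG] at *
      exact hxy.trans hyz
    · intro x p₁ p₂ h1 h2 hne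
      rw [hG] at h1 h2
      rw [hG, hG]
      letI : IsTrans V (Relation.TransGen B) := ⟨fun _ _ _ => Relation.TransGen.trans⟩
      letI : IsIrrefl V (Relation.TransGen B) := ⟨hBacyc⟩
      have wf : WellFounded (Relation.TransGen B) :=
        Finite.wellFounded_of_trans_of_irrefl _
      have key : ∀ x, ∀ p₁ p₂, Relation.TransGen B p₁ x → Relation.TransGen B p₂ x →
          p₁ = p₂ ∨ Relation.TransGen B p₁ p₂ ∨ Relation.TransGen B p₂ p₁ := by
        intro x
        induction x using wf.induction with
        | _ x ih =>
          intro p₁ p₂ h1 h2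
          obtain ⟨b₁, hb₁, he₁⟩ := (Relation.TransGen.tail'_iff).mp h1
          obtain ⟨b₂, hb₂, he₂⟩ := (Relation.TransGen.tail'_iff).mp h2
          have hbb : b₁ = b₂ := hdeg _ _ _ he₁ he₂
          subst hbb
          rcases (Relation.reflTransGen_iff_eq_or_transGen.mp hb₁) with rfl | h1'
          · rcases (Relation.reflTransGen_iff_eq_or_transGen.mp hb₂) with rfl | h2'
            · exact Or.inl rfl
            · exact Or.inr (Or.inr h2')
          · rcases (Relation.reflTransGen_iff_eq_or_transGen.mp hb₂) with rfl | h2'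
            · exact Or.inr (Or.inl h1')
            · exact ih b₁ (Relation.TransGen.single he₁) p₁ p₂ h1' h2'
      rcases key x p₁ p₂ h1 h2 with rfl | h | h
      · exact absurd rfl hne
      · exact Or.inl h
      · exact Or.inr h
  · rintro ⟨htrans, hto⟩
    have hGirr : ∀ v, ¬ G v v := fun v hv => hacyc v (Relation.TransGen.single hv)
    refine ⟨fun u w => G u w ∧ ∀ v, ¬ (G u v ∧ G v w), ⟨?_, ?_⟩, ?_⟩
    · intro u v w hu hv
      by_contra hne
      rcases hto w u v hu.1 hv.1 hne with h | h
      · exact hu.2 v ⟨h, hv.1⟩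
      · exact hv.2 u ⟨h, hu.1⟩
    · intro v hv
      exact hacyc v (Relation.TransGen.mono (fun a b h => h.1) _ _ hv)
    · intro u w
      constructor
      · letI : IsTrans V G := ⟨fun x y z => htrans x y z⟩
        letI : IsIrrefl V G := ⟨hGirr⟩
        have wfG : WellFounded G := Finite.wellFounded_of_trans_of_irrefl _
        have wfG' : WellFounded (fun a b => G b a) := by
          letI : IsTrans V (fun a b => G b a) := ⟨fun x y z h1 h2 => htrans z y x h2 h1⟩
          letI : IsIrrefl V (fun a b => G b a) := ⟨hGirr⟩
          exact Finite.wellFounded_of_trans_of_irrefl _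
        induction w using wfG.induction with
        | _ w ih =>
          intro huw
          by_cases hB : ∀ v, ¬ (G u v ∧ G v w)
          · exact Relation.TransGen.single ⟨huw, hB⟩
          · have hS : ∃ v, G u v ∧ G v w := by
              by_contra h
              push_neg at h
              exact hB fun v hv => h v hv.1 hv.2
            obtain ⟨v, hvS, hvmax⟩ := wfG'.has_min {v | G u v ∧ G v w} hS
            have hBvw : (G v w ∧ ∀ z, ¬ (G v z ∧ G z w)) :=
              ⟨hvS.2, fun z hz => hvmax z ⟨htrans u v z hvS.1 hz.1, hz.2⟩ hz.1⟩
            exact (ih v hvS.2 hvS.1).tail hBvw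
      · intro h
        have h' : Relation.TransGen G u w := Relation.TransGen.mono (fun a b hb => hb.1) _ _ h
        haveI : IsTrans V G := ⟨fun x y z => htrans x y z⟩
        rwa [Relation.transGen_eq_self] at h'
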